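/- arXiv:0811.0290 — 3 statements merged into one kernel-verified Lean document; each statement's English description precedes it below -/
import Mathlib

section
/- Let c ≥ 3 be an odd integer and define a^{(c)}(n) = 2·m_2(n) + c for n ≥ 0. Then every odd integer N ≥ 3c can be represented in exactly one way as a sum N = a^{(c)}(k) + 2·a^{(c)}(l) with k, l nonnegative integers. -/
/-- Moser function `m_r(n)`: reinterpret the base-`r` digits of `n` as base-`r²` digits,
i.e. `m_r(n) = Σ_i ν_i r^(2i)` where `n = Σ_i ν_i r^i` is the base-`r` expansion. -/
def moser (r n : ℕ) : ℕ := Nat.ofDigits (r ^ 2) (Nat.digits r n)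

/-- `s^(r)_n = r · m_r(n−1) + 1` for `n ≥ 1`. -/
def moserS (r n : ℕ) : ℕ := r * moser r (n - 1) + 1

/-- The `i`-th base-`r` digit of `n` (0 if beyond the expansion). -/
def dig (r n i : ℕ) : ℕ := (Nat.digits r n).getD i 0

/-- Josephus–Groër survivor function: with `M = N` if `N` is odd, `M = N − 1` otherwise,
and `M = Σ_j b_j 2^j` the binary expansion, `W(N) = 1 + Σ_{j odd} b_j 2^j`. -/
def W (N : ℕ) : ℕ :=
  let M := if N % 2 = 1 then N else N - 1
  1 + ((((Nat.digits 2 M).zipIdx.map Prod.swap).filter (fun p => p.1 % 2 = 1)).map (fun p => p.2 * 2 ^ p.1)).sum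

lemma moser2_step (n : ℕ) (hn : 0 < n) :
    moser 2 n = 4 * moser 2 (n / 2) + n % 2 := by
  unfold moser
  rw [Nat.digits_def' (by norm_num : 2 ≤ 2) hn, Nat.ofDigits_cons]
  push_cast; ring

lemma le_moser2 (n : ℕ) : n ≤ moser 2 n := by
  induction n using Nat.strong_induction_on with
  | _ n ih =>
    rcases Nat.eq_zero_or_pos n with h | h
    · simp [h, moser]
    · rw [moser2_step n h]
      have := ih (n / 2) (Nat.div_lt_self h one_lt_two)
      omega

lemma moser2_double_add (a ε : ℕ) (hε : ε < 2) :
    moser 2 (2 * a + ε) = 4 * moser 2 a + ε := by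
  rcases Nat.eq_zero_or_pos (2 * a + ε) with h0 | h0
  · have : a = 0 ∧ ε = 0 := by omega
    simp [this.1, this.2, moser]
  · rw [moser2_step _ h0]
    have h1 : (2 * a + ε) / 2 = a := by omega
    have h2 : (2 * a + ε) % 2 = ε := by omega
    rw [h1, h2]

lemma aux_unique (M : ℕ) :
    ∃! kl : ℕ × ℕ, moser 2 kl.1 + 2 * moser 2 kl.2 = M := by
  induction M using Nat.strong_induction_on with
  | _ M ih =>
    rcases Nat.eq_zero_or_pos M with h | h
    · refine ⟨(0, 0), by simp [h, moser], ?_⟩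
      rintro ⟨k, l⟩ hkl
      dsimp only at hkl
      have hk := le_moser2 k
      have hl := le_moser2 l
      simp only [Prod.mk.injEq]
      omega
    · obtain ⟨⟨k0, l0⟩, hp, hu⟩ := ih (M / 4) (by omega)
      dsimp only at hp
      refine ⟨(2 * k0 + M % 2, 2 * l0 + M / 2 % 2), ?_, ?_⟩
      · dsimp only
        rw [moser2_double_add k0 (M % 2) (by omega),
            moser2_double_add l0 (M / 2 % 2) (by omega)]
        omega
      · rintro ⟨k, l⟩ hkl
        dsimp only at hkl
        have hk : moser 2 k = 4 * moser 2 (k / 2) + k % 2 := by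
          rcases Nat.eq_zero_or_pos k with h0 | h0
          · simp [h0, moser]
          · exact moser2_step k h0
        have hl : moser 2 l = 4 * moser 2 (l / 2) + l % 2 := by
          rcases Nat.eq_zero_or_pos l with h0 | h0
          · simp [h0, moser]
          · exact moser2_step l h0
        have hrec : moser 2 (k / 2) + 2 * moser 2 (l / 2) = M / 4 := by omega
        have := hu (k / 2, l / 2) hrec
        simp only [Prod.mk.injEq] at this ⊢
        omega

/-- For odd `c ≥ 3`, every odd `N ≥ 3c` is uniquely a sum
`N = a^(c)(k) + 2·a^(c)(l)` where `a^(c)(n) = 2·m_2(n) + c`. -/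
theorem moser_shifted_unique_representation (c : ℕ) (hc : Odd c) (hc3 : 3 ≤ c)
    (N : ℕ) (hN : Odd N) (hN3 : 3 * c ≤ N) :
    ∃! kl : ℕ × ℕ,
      N = (2 * moser 2 kl.1 + c) + 2 * (2 * moser 2 kl.2 + c) := by
  obtain ⟨c', hc'⟩ := hc
  obtain ⟨n', hn'⟩ := hN
  obtain ⟨⟨k0, l0⟩, hp, hu⟩ := aux_unique ((N - 3 * c) / 2)
  dsimp only at hp
  refine ⟨(k0, l0), ?_, ?_⟩
  · dsimp only
    omega
  · rintro ⟨k, l⟩ hkl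
    dsimp only at hkl
    exact hu (k, l) (by dsimp only; omega)
end

section
/- Let r ≥ 2 be an integer. For every n ≥ 1, m_r(n) = m_r(n−1) + (r^{2τ+1} + 1)/(r + 1), where τ ≥ 0 is the largest integer such that r^τ divides n (equivalently, τ is the index of the least nonzero base-r digit of n); note that r + 1 divides r^{2τ+1} + 1, so the quotient is an integer. -/
lemma moser_eq (r : ℕ) (hr : 2 ≤ r) (n : ℕ) :
    moser r n = n % r + r ^ 2 * moser r (n / r) := by
  rcases eq_or_ne n 0 with rfl | h
  · simp [moser]
  · unfold moser
    rw [Nat.digits_def' (by omega : 1 < r) (Nat.pos_of_ne_zero h), Nat.ofDigits_cons]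

lemma moser_key (r : ℕ) (hr : 2 ≤ r) : ∀ τ n, 1 ≤ n → r ^ τ ∣ n → ¬ r ^ (τ + 1) ∣ n →
    (r + 1) * moser r n = (r + 1) * moser r (n - 1) + (r ^ (2 * τ + 1) + 1) := by
  intro τ
  induction τ with
  | zero =>
    intro n hn _ h1
    rw [pow_one] at h1
    have hdr : n % r < r := Nat.mod_lt _ (by omega)
    have hd1 : 1 ≤ n % r := by
      rcases Nat.eq_zero_or_pos (n % r) with h | h
      · exact absurd (Nat.dvd_of_mod_eq_zero h) h1
      · exact h
    have hnk : n = r * (n / r) + n % r := (Nat.div_add_mod n r).symm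
    have h1' : n - 1 = (n % r - 1) + r * (n / r) := by omega
    have hm : (n - 1) % r = n % r - 1 := by
      rw [h1', Nat.add_mul_mod_self_left, Nat.mod_eq_of_lt (by omega)]
    have hdv : (n - 1) / r = n / r := by
      rw [h1', Nat.add_mul_div_left _ _ (by omega : 0 < r),
        Nat.div_eq_of_lt (by omega), Nat.zero_add]
    rw [moser_eq r hr n, moser_eq r hr (n - 1), hm, hdv]
    obtain ⟨e, he⟩ := Nat.exists_eq_add_of_le hd1
    rw [he]
    simp only [Nat.add_sub_cancel_left, pow_one, Nat.mul_zero, Nat.zero_add]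
    ring
  | succ τ ih =>
    intro n hn hdvd h1
    have hrd : r ∣ n := dvd_trans (dvd_pow_self r (Nat.succ_ne_zero τ)) hdvd
    obtain ⟨m, rfl⟩ := hrd
    have hm1 : 1 ≤ m := by
      rcases Nat.eq_zero_or_pos m with rfl | h
      · simp at hn
      · exact h
    obtain ⟨m', rfl⟩ : ∃ m', m = m' + 1 := ⟨m - 1, by omega⟩
    have hτm : r ^ τ ∣ m' + 1 := by
      have := hdvd
      rw [pow_succ'] at this
      exact (mul_dvd_mul_iff_left (by omega : (r:ℕ) ≠ 0)).mp this
    have hτm' : ¬ r ^ (τ + 1) ∣ m' + 1 := by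
      intro h
      exact h1 (by rw [pow_succ']; exact mul_dvd_mul_left r h)
    have ihm := ih (m' + 1) (by omega) hτm hτm'
    simp only [Nat.add_sub_cancel] at ihm
    have hmod : (r * (m' + 1)) % r = 0 := Nat.mul_mod_right r _
    have hdiv : (r * (m' + 1)) / r = m' + 1 := Nat.mul_div_cancel_left _ (by omega)
    have h1' : r * (m' + 1) - 1 = (r - 1) + r * m' := by
      have : r * (m' + 1) = r * m' + r := by ring
      omega
    have hm2 : (r * (m' + 1) - 1) % r = r - 1 := by
      rw [h1', Nat.add_mul_mod_self_left, Nat.mod_eq_of_lt (by omega)]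
    have hd2 : (r * (m' + 1) - 1) / r = m' := by
      rw [h1', Nat.add_mul_div_left _ _ (by omega : 0 < r),
        Nat.div_eq_of_lt (by omega), Nat.zero_add]
    rw [moser_eq r hr (r * (m' + 1)), moser_eq r hr (r * (m' + 1) - 1), hmod, hdiv, hm2, hd2,
      Nat.zero_add]
    have hpow : r ^ (2 * (τ + 1) + 1) = r ^ (2 * τ + 1) * r ^ 2 := by
      rw [← pow_add]; ring_nf
    rw [hpow]
    have hstep : (r + 1) * (r ^ 2 * moser r (m' + 1)) = r ^ 2 * ((r + 1) * moser r (m' + 1)) := by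
      ring
    rw [hstep, ihm]
    zify [show (1:ℕ) ≤ r by omega]
    ring

/-- Recursion for the Moser numbers: for `n ≥ 1`,
`m_r(n) = m_r(n−1) + (r^(2τ+1) + 1)/(r + 1)` where `τ` is the largest integer with
`r^τ ∣ n`; moreover `r + 1` divides `r^(2τ+1) + 1`. -/
theorem moser_recursion (r : ℕ) (hr : 2 ≤ r) (n : ℕ) (hn : 1 ≤ n)
    (τ : ℕ) (hτ : r ^ τ ∣ n) (hτ' : ¬ r ^ (τ + 1) ∣ n) :
    (r + 1) ∣ r ^ (2 * τ + 1) + 1 ∧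
      moser r n = moser r (n - 1) + (r ^ (2 * τ + 1) + 1) / (r + 1) := by
  have hdvd : (r + 1) ∣ r ^ (2 * τ + 1) + 1 := by
    have h : ((r : ℤ) + 1) ∣ (r : ℤ) ^ (2 * τ + 1) + 1 := by
      have := Odd.add_dvd_pow_add_pow (r : ℤ) 1 (⟨τ, by ring⟩ : Odd (2 * τ + 1))
      simpa using this
    have := Int.natCast_dvd_natCast.mpr (dvd_refl (r + 1))
    exact_mod_cast (by push_cast; exact h : ((r + 1 : ℕ) : ℤ) ∣ ((r ^ (2 * τ + 1) + 1 : ℕ) : ℤ)) |>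
      Int.ofNat_dvd.mp
  refine ⟨hdvd, ?_⟩
  have key := moser_key r hr τ n hn hτ hτ'
  have hq : (r + 1) * ((r ^ (2 * τ + 1) + 1) / (r + 1)) = r ^ (2 * τ + 1) + 1 :=
    Nat.mul_div_cancel' hdvd
  apply Nat.eq_of_mul_eq_mul_left (show 0 < r + 1 by omega)
  rw [key, Nat.mul_add, hq]
end

section
/- For every odd integer N ≥ 3 one has N = W(N−2) + 2·W((N−1)/2); moreover, in the unique representation N = s^{(2)}_k + 2·s^{(2)}_l with k, l ≥ 1, the terms are s^{(2)}_k = W(N−2) and s^{(2)}_l = W((N−1)/2). -/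
/-- Sum of the even-position binary bits: `SE n = Σ_{j even} b_j 2^j`. -/
def SE (n : ℕ) : ℕ :=
  if n = 0 then 0 else n % 2 + 4 * SE (n / 4)
termination_by n
decreasing_by exact Nat.div_lt_self (Nat.pos_of_ne_zero (by assumption)) (by norm_num)

lemma SE_zero : SE 0 = 0 := by rw [SE]; simp

lemma SE_eq (n : ℕ) : SE n = n % 2 + 4 * SE (n / 4) := by
  rw [SE]
  by_cases h : n = 0
  · subst h; simp [SE_zero]
  · rw [if_neg h]

lemma moser_rec (n : ℕ) : moser 2 n = n % 2 + 4 * moser 2 (n / 2) := by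
  rcases Nat.eq_zero_or_pos n with h | h
  · subst h; simp [moser]
  · unfold moser
    rw [Nat.digits_def' (by norm_num : (1:ℕ) < 2) h, Nat.ofDigits_cons]
    norm_num

lemma SE_mem (q : ℕ) : ∃ a, moser 2 a = SE q := by
  induction q using Nat.strong_induction_on with
  | _ q ih =>
    rcases Nat.eq_zero_or_pos q with h | h
    · exact ⟨0, by simp [moser, h, SE_zero]⟩
    · obtain ⟨a, ha⟩ := ih (q / 4) (Nat.div_lt_self h (by norm_num))
      refine ⟨2 * a + q % 2, ?_⟩
      rw [moser_rec, SE_eq q]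
      have h2 : (2 * a + q % 2) % 2 = q % 2 := by omega
      have h3 : (2 * a + q % 2) / 2 = a := by omega
      rw [h2, h3, ha]

lemma moser_unique (P : ℕ) : ∀ a b a' b' : ℕ, moser 2 a + 2 * moser 2 b = P →
    moser 2 a' + 2 * moser 2 b' = P →
    moser 2 a = moser 2 a' ∧ moser 2 b = moser 2 b' := by
  induction P using Nat.strong_induction_on with
  | _ P ih =>
    intro a b a' b' h1 h2
    rcases Nat.eq_zero_or_pos P with hP | hP
    · omega
    · have e1 := moser_rec a
      have e2 := moser_rec b
      have e3 := moser_rec a'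
      have e4 := moser_rec b'
      have k1 : moser 2 (a / 2) + 2 * moser 2 (b / 2) = P / 4 := by omega
      have k2 : moser 2 (a' / 2) + 2 * moser 2 (b' / 2) = P / 4 := by omega
      obtain ⟨u, v⟩ := ih (P / 4) (Nat.div_lt_self hP (by norm_num)) _ _ _ _ k1 k2
      constructor <;> omega

lemma SE_split (p : ℕ) : SE p + 2 * SE (p / 2) = p := by
  induction p using Nat.strong_induction_on with
  | _ p ih =>
    rcases Nat.eq_zero_or_pos p with h | h
    · simp [h, SE_zero]
    · have h8 : p / 2 / 4 = p / 4 / 2 := by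
        rw [Nat.div_div_eq_div_mul, Nat.div_div_eq_div_mul]
      have := ih (p / 4) (Nat.div_lt_self h (by norm_num))
      rw [SE_eq p, SE_eq (p / 2), h8]
      omega

/-- Auxiliary: the weighted sum over odd positions, starting at index `s`. -/
def InnerF (s : ℕ) (l : List ℕ) : ℕ :=
  ((((l.zipIdx s).map Prod.swap).filter (fun p => p.1 % 2 = 1)).map (fun p => p.2 * 2 ^ p.1)).sum

lemma InnerF_nil (s : ℕ) : InnerF s [] = 0 := rfl

lemma InnerF_cons (s a : ℕ) (l : List ℕ) :
    InnerF s (a :: l) = (if s % 2 = 1 then a * 2 ^ s else 0) + InnerF (s + 1) l := by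
  unfold InnerF
  by_cases h : s % 2 = 1 <;> simp [List.zipIdx_cons, List.filter_cons, h]

lemma InnerF_shift (l : List ℕ) : ∀ s : ℕ, InnerF (s + 2) l = 4 * InnerF s l := by
  induction l with
  | nil => intro s; simp [InnerF_nil]
  | cons a l ih =>
    intro s
    rw [InnerF_cons, InnerF_cons, show s + 2 + 1 = (s + 1) + 2 by ring, ih (s + 1)]
    by_cases h : s % 2 = 1
    · rw [if_pos (by omega), if_pos h]
      rw [pow_succ, pow_succ]
      ring
    · rw [if_neg (by omega), if_neg h]
      omega

lemma Inner_digits (n : ℕ) :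
    ((((Nat.digits 2 n).zipIdx.map Prod.swap).filter (fun p => p.1 % 2 = 1)).map
      (fun p => p.2 * 2 ^ p.1)).sum = 2 * SE (n / 2) := by
  show InnerF 0 (Nat.digits 2 n) = 2 * SE (n / 2)
  induction n using Nat.strong_induction_on with
  | _ n ih =>
    rcases Nat.lt_or_ge n 2 with h | h
    · interval_cases n <;> simp [InnerF_nil, InnerF_cons, SE_zero]
    · have h2 : 0 < n := by omega
      have h3 : 0 < n / 2 := by omega
      rw [Nat.digits_def' (by norm_num : (1:ℕ) < 2) h2,
        Nat.digits_def' (by norm_num : (1:ℕ) < 2) h3]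
      rw [InnerF_cons, InnerF_cons, if_neg (by norm_num), if_pos (by norm_num)]
      rw [show (1 : ℕ) + 1 = 0 + 2 by ring, InnerF_shift]
      have := ih (n / 2 / 2) (by omega)
      have h8 : n / 2 / 2 / 2 = n / 2 / 4 := by
        simp [Nat.div_div_eq_div_mul]
      rw [h8] at this
      rw [SE_eq (n / 2)]
      omega

lemma W_eq (m : ℕ) :
    W m = 1 + 2 * SE ((if m % 2 = 1 then m else m - 1) / 2) := by
  rw [show W m = 1 + ((((Nat.digits 2 (if m % 2 = 1 then m else m - 1)).zipIdx.map Prod.swap).filter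
    (fun p => p.1 % 2 = 1)).map (fun p => p.2 * 2 ^ p.1)).sum from rfl, Inner_digits]

/-- For every odd `N ≥ 3`, `N = W(N−2) + 2·W((N−1)/2)`; moreover, in any representation
`N = s^(2)_k + 2·s^(2)_l` with `k, l ≥ 1` (which is unique), the terms are
`s^(2)_k = W(N−2)` and `s^(2)_l = W((N−1)/2)`. -/
theorem groer_decomposition (N : ℕ) (hN : Odd N) (hN3 : 3 ≤ N) :
    N = W (N - 2) + 2 * W ((N - 1) / 2) ∧
      ∀ k l : ℕ, 1 ≤ k → 1 ≤ l → N = moserS 2 k + 2 * moserS 2 l →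
        moserS 2 k = W (N - 2) ∧ moserS 2 l = W ((N - 1) / 2) := by
  have hodd : N % 2 = 1 := Nat.odd_iff.mp hN
  set p := (N - 3) / 2 with hp
  have hNp : N = 2 * p + 3 := by omega
  have hW1 : W (N - 2) = 1 + 2 * SE p := by
    have h2 : (N - 2) % 2 = 1 := by omega
    have h3 : (N - 2) / 2 = p := by omega
    rw [W_eq, if_pos h2, h3]
  have hW2 : W ((N - 1) / 2) = 1 + 2 * SE (p / 2) := by
    rw [W_eq]
    have hm : (N - 1) / 2 = p + 1 := by omega
    rw [hm]
    by_cases hpp : p % 2 = 1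
    · rw [if_neg (by omega)]
      simp
    · rw [if_pos (by omega)]
      have h4 : (p + 1) / 2 = p / 2 := by omega
      rw [h4]
  have hsplit := SE_split p
  constructor
  · omega
  · intro k l hk hl hrep
    obtain ⟨a₀, ha₀⟩ := SE_mem p
    obtain ⟨b₀, hb₀⟩ := SE_mem (p / 2)
    have hk' : moserS 2 k = 2 * moser 2 (k - 1) + 1 := rfl
    have hl' : moserS 2 l = 2 * moser 2 (l - 1) + 1 := rfl
    have hA : moser 2 (k - 1) + 2 * moser 2 (l - 1) = p := by omega
    have hB : moser 2 a₀ + 2 * moser 2 b₀ = p := by omega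
    obtain ⟨u, v⟩ := moser_unique p _ _ _ _ hA hB
    constructor <;> omega
end
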